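/- arXiv:2006.10023 — 2 statements merged into one kernel-verified Lean document; each statement's English description precedes it below -/
import Mathlib

section
/- For a piecewise affine generator g(z) = Σ_ω 1_{z∈ω}(A_ω z + b_ω) with Gaussian prior z ~ N(0, Σz) and Gaussian noise model p(x|z) = φ(x; g(z), Σx), the marginal density satisfies p(x) = Σ_{ω∈Ω} φ(x; b_ω, Σx + A_ω Σz A_ω^T) · ∫_ω φ(z; μ_ω(x), Σ_ω) dz, where Σ_ω = (Σz^{-1} + A_ω^T Σx^{-1} A_ω)^{-1} and μ_ω(x) = Σ_ω A_ω^T Σx^{-1}(x - b_ω). -/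
open Matrix MeasureTheory

/-- Multivariate Gaussian density with mean `m` and covariance `S`, evaluated at `x`. -/
noncomputable def gaussD {ι : Type} [Fintype ι] [DecidableEq ι]
    (S : Matrix ι ι ℝ) (m x : ι → ℝ) : ℝ :=
  (Real.sqrt ((2 * Real.pi) ^ (Fintype.card ι) * S.det))⁻¹ *
    Real.exp (-(1 / 2) * ((x - m) ⬝ᵥ (S⁻¹ *ᵥ (x - m))))

section Aux

variable {D S : ℕ}

lemma bil_symm {n : ℕ} {M : Matrix (Fin n) (Fin n) ℝ} (h : Mᵀ = M) (v w : Fin n → ℝ) :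
    v ⬝ᵥ M *ᵥ w = w ⬝ᵥ M *ᵥ v := by
  rw [dotProduct_mulVec, ← mulVec_transpose, h, dotProduct_comm]

lemma P_posDef (A : Matrix (Fin D) (Fin S) ℝ)
    {Sx : Matrix (Fin D) (Fin D) ℝ} (hSx : Sx.PosDef)
    {Sz : Matrix (Fin S) (Fin S) ℝ} (hSz : Sz.PosDef) :
    (Sz⁻¹ + Aᵀ * Sx⁻¹ * A).PosDef := by
  refine hSz.inv.add_posSemidef ?_
  have := hSx.inv.posSemidef.conjTranspose_mul_mul_same A
  simpa [Matrix.mul_assoc] using this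

lemma C_posDef (A : Matrix (Fin D) (Fin S) ℝ)
    {Sx : Matrix (Fin D) (Fin D) ℝ} (hSx : Sx.PosDef)
    {Sz : Matrix (Fin S) (Fin S) ℝ} (hSz : Sz.PosDef) :
    (Sx + A * Sz * Aᵀ).PosDef := by
  refine hSx.add_posSemidef ?_
  have := hSz.posSemidef.mul_mul_conjTranspose_same A
  simpa [Matrix.mul_assoc] using this

lemma det_eq (A : Matrix (Fin D) (Fin S) ℝ)
    {Sx : Matrix (Fin D) (Fin D) ℝ} (hSx : Sx.PosDef)
    {Sz : Matrix (Fin S) (Fin S) ℝ} (hSz : Sz.PosDef) :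
    (Sx + A * Sz * Aᵀ).det = Sx.det * Sz.det * (Sz⁻¹ + Aᵀ * Sx⁻¹ * A).det := by
  have hx : IsUnit Sx.det := hSx.det_pos.ne'.isUnit
  have hz : IsUnit Sz.det := hSz.det_pos.ne'.isUnit
  have h1 : Sx + A * Sz * Aᵀ = Sx * (1 + (Sx⁻¹ * A) * (Sz * Aᵀ)) := by
    rw [mul_add, mul_one]
    simp [← Matrix.mul_assoc, Matrix.mul_nonsing_inv _ hx]
  rw [h1, det_mul, det_one_add_mul_comm]
  have h2 : 1 + Sz * Aᵀ * (Sx⁻¹ * A) = Sz * (Sz⁻¹ + Aᵀ * Sx⁻¹ * A) := by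
    rw [mul_add, Matrix.mul_nonsing_inv _ hz, Matrix.mul_assoc, Matrix.mul_assoc]
  rw [h2, det_mul]
  ring

lemma exponent_eq (A : Matrix (Fin D) (Fin S) ℝ)
    (Sx : Matrix (Fin D) (Fin D) ℝ) (hSx : Sx.PosDef)
    (Sz : Matrix (Fin S) (Fin S) ℝ) (hSz : Sz.PosDef)
    (y : Fin D → ℝ) (z : Fin S → ℝ) :
    (y - A *ᵥ z) ⬝ᵥ (Sx⁻¹ *ᵥ (y - A *ᵥ z)) + z ⬝ᵥ (Sz⁻¹ *ᵥ z)
      = y ⬝ᵥ ((Sx + A * Sz * Aᵀ)⁻¹ *ᵥ y)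
        + (z - (Sz⁻¹ + Aᵀ * Sx⁻¹ * A)⁻¹ *ᵥ (Aᵀ *ᵥ (Sx⁻¹ *ᵥ y)))
          ⬝ᵥ ((Sz⁻¹ + Aᵀ * Sx⁻¹ * A) *ᵥ
              (z - (Sz⁻¹ + Aᵀ * Sx⁻¹ * A)⁻¹ *ᵥ (Aᵀ *ᵥ (Sx⁻¹ *ᵥ y)))) := by
  set P := Sz⁻¹ + Aᵀ * Sx⁻¹ * A with hPdef
  have hP : P.PosDef := P_posDef A hSx hSz
  have hxs : Sx⁻¹ᵀ = Sx⁻¹ := (by simpa using hSx.inv.isHermitian : Sx⁻¹.IsSymm)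
  have hPs : Pᵀ = P := (by simpa using hP.isHermitian : P.IsSymm)
  set u := Sx⁻¹ *ᵥ y with hu
  set t := Aᵀ *ᵥ u with ht
  set μ := P⁻¹ *ᵥ t with hμ
  have hw : (Sx + A * Sz * Aᵀ)⁻¹ = Sx⁻¹ - Sx⁻¹ * A * P⁻¹ * Aᵀ * Sx⁻¹ :=
    Matrix.add_mul_mul_inv_eq_sub _ _ _ _ hSx.isUnit hSz.isUnit hP.isUnit
  have hPP : ∀ w : Fin S → ℝ, P *ᵥ (P⁻¹ *ᵥ w) = w := by
    intro w
    rw [mulVec_mulVec, Matrix.mul_nonsing_inv _ hP.det_pos.ne'.isUnit, one_mulVec]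
  have hAz : ∀ (w : Fin S → ℝ) (v : Fin D → ℝ), w ⬝ᵥ (Aᵀ *ᵥ v) = (A *ᵥ w) ⬝ᵥ v := by
    intro w v; rw [dotProduct_mulVec, vecMul_transpose]
  have e1 : y ⬝ᵥ ((Sx⁻¹ * A * P⁻¹ * Aᵀ * Sx⁻¹) *ᵥ y) = t ⬝ᵥ (P⁻¹ *ᵥ t) := by
    have : (Sx⁻¹ * A * P⁻¹ * Aᵀ * Sx⁻¹) *ᵥ y = Sx⁻¹ *ᵥ (A *ᵥ (P⁻¹ *ᵥ t)) := by
      simp [← mulVec_mulVec, ht, hu]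
    rw [this, bil_symm hxs, ← hu, ← hAz, ← ht, dotProduct_comm]
  have e2 : z ⬝ᵥ (P *ᵥ z) = z ⬝ᵥ (Sz⁻¹ *ᵥ z) + (A *ᵥ z) ⬝ᵥ (Sx⁻¹ *ᵥ (A *ᵥ z)) := by
    rw [hPdef, add_mulVec, dotProduct_add]
    congr 1
    rw [← mulVec_mulVec, ← mulVec_mulVec, hAz]
  have e3 : z ⬝ᵥ (P *ᵥ μ) = (A *ᵥ z) ⬝ᵥ (Sx⁻¹ *ᵥ y) := by
    rw [hμ, hPP, ht, hAz, hu]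
  have e4 : μ ⬝ᵥ (P *ᵥ z) = (A *ᵥ z) ⬝ᵥ (Sx⁻¹ *ᵥ y) := by
    rw [bil_symm hPs, e3]
  have e5 : μ ⬝ᵥ (P *ᵥ μ) = t ⬝ᵥ (P⁻¹ *ᵥ t) := by
    rw [hμ, hPP, dotProduct_comm]
  have e6 : y ⬝ᵥ (Sx⁻¹ *ᵥ (A *ᵥ z)) = (A *ᵥ z) ⬝ᵥ (Sx⁻¹ *ᵥ y) := bil_symm hxs y (A *ᵥ z)
  rw [hw]
  simp only [sub_mulVec, mulVec_sub, dotProduct_sub, sub_dotProduct]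
  rw [e1, e2, e3, e4, e5, e6]
  ring

lemma gauss_prod (A : Matrix (Fin D) (Fin S) ℝ) (b : Fin D → ℝ)
    {Sx : Matrix (Fin D) (Fin D) ℝ} (hSx : Sx.PosDef)
    {Sz : Matrix (Fin S) (Fin S) ℝ} (hSz : Sz.PosDef)
    (x : Fin D → ℝ) (z : Fin S → ℝ) :
    gaussD Sx (A *ᵥ z + b) x * gaussD Sz 0 z
      = gaussD (Sx + A * Sz * Aᵀ) b x *
        gaussD ((Sz⁻¹ + Aᵀ * Sx⁻¹ * A)⁻¹)
          ((Sz⁻¹ + Aᵀ * Sx⁻¹ * A)⁻¹ *ᵥ (Aᵀ *ᵥ (Sx⁻¹ *ᵥ (x - b)))) z := by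
  have hP : (Sz⁻¹ + Aᵀ * Sx⁻¹ * A).PosDef := P_posDef A hSx hSz
  have hC : (Sx + A * Sz * Aᵀ).PosDef := C_posDef A hSx hSz
  have hPinv : ((Sz⁻¹ + Aᵀ * Sx⁻¹ * A)⁻¹)⁻¹ = Sz⁻¹ + Aᵀ * Sx⁻¹ * A :=
    Matrix.nonsing_inv_nonsing_inv _ hP.det_pos.ne'.isUnit
  have hdetPinv : ((Sz⁻¹ + Aᵀ * Sx⁻¹ * A)⁻¹).det = ((Sz⁻¹ + Aᵀ * Sx⁻¹ * A).det)⁻¹ := by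
    rw [Matrix.det_nonsing_inv, Ring.inverse_eq_inv']
  unfold gaussD
  rw [mul_mul_mul_comm, ← Real.exp_add, mul_mul_mul_comm, ← Real.exp_add]
  congr 1
  · rw [← mul_inv, ← mul_inv,
      ← Real.sqrt_mul (mul_nonneg (by positivity) hSx.det_pos.le),
      ← Real.sqrt_mul (mul_nonneg (by positivity) hC.det_pos.le)]
    congr 2
    rw [det_eq A hSx hSz, hdetPinv]
    have key : ∀ aD aS dX dZ dP : ℝ, dP ≠ 0 →
        aD * dX * (aS * dZ) = aD * (dX * dZ * dP) * (aS * dP⁻¹) := by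
      intro aD aS dX dZ dP hdP
      field_simp
    exact key _ _ _ _ _ hP.det_pos.ne'
  · have hv : x - (A *ᵥ z + b) = (x - b) - A *ᵥ z := by abel
    rw [hv, sub_zero, hPinv]
    have := exponent_eq A Sx hSx Sz hSz (x - b) z
    congr 1
    linear_combination (-(1:ℝ)/2) * this

lemma quad_cont {n : ℕ} (M : Matrix (Fin n) (Fin n) ℝ) :
    Continuous fun z : Fin n → ℝ => z ⬝ᵥ M *ᵥ z :=
  continuous_id.dotProduct (continuous_const.matrix_mulVec continuous_id)

lemma eigen_lb {n : ℕ} {M : Matrix (Fin n) (Fin n) ℝ} (hM : M.PosDef) :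
    ∃ c > 0, ∀ z : Fin n → ℝ, c * ∑ i, z i ^ 2 ≤ z ⬝ᵥ M *ᵥ z := by
  have hpos : ∀ z : Fin n → ℝ, z ≠ 0 → 0 < z ⬝ᵥ M *ᵥ z := by
    intro z hz
    have := hM.dotProduct_mulVec_pos hz
    simpa using this
  have hnn : ∀ z : Fin n → ℝ, 0 ≤ z ⬝ᵥ M *ᵥ z := by
    intro z
    have := hM.posSemidef.dotProduct_mulVec_nonneg z
    simpa using this
  rcases Nat.eq_zero_or_pos n with hn | hn
  · refine ⟨1, one_pos, fun z => ?_⟩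
    subst hn
    simp [hnn z]
  · set K : Set (Fin n → ℝ) := {z | ∑ i, z i ^ 2 = 1} with hK
    have hcont : Continuous fun z : Fin n → ℝ => ∑ i, z i ^ 2 := by
      exact continuous_finset_sum _ fun i _ => (continuous_apply i).pow 2
    have hclosed : IsClosed K := isClosed_eq hcont continuous_const
    have hbdd : Bornology.IsBounded K := by
      rw [Metric.isBounded_iff_subset_closedBall 0]
      refine ⟨1, fun z hz => ?_⟩
      simp only [Metric.mem_closedBall, dist_zero_right]
      rw [pi_norm_le_iff_of_nonneg zero_le_one]
      intro i
      have hz' : ∑ j, z j ^ 2 = 1 := hz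
      have hle : z i ^ 2 ≤ 1 := by
        rw [← hz']
        exact Finset.single_le_sum (f := fun j => z j ^ 2)
          (fun j _ => sq_nonneg (z j)) (Finset.mem_univ i)
      rw [Real.norm_eq_abs, abs_le]
      constructor <;> nlinarith [sq_nonneg (z i + 1), sq_nonneg (z i - 1)]
    have hcompact : IsCompact K := Metric.isCompact_of_isClosed_isBounded hclosed hbdd
    have hne : K.Nonempty := by
      refine ⟨Pi.single ⟨0, hn⟩ 1, ?_⟩
      simp [hK, Pi.single_apply, Finset.sum_ite_eq']
    obtain ⟨z₀, hz₀K, hz₀min⟩ := hcompact.exists_isMinOn hne (quad_cont M).continuousOn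
    have hz₀ne : z₀ ≠ 0 := by
      intro h
      rw [hK] at hz₀K
      simp [h] at hz₀K
    refine ⟨z₀ ⬝ᵥ M *ᵥ z₀, hpos z₀ hz₀ne, fun z => ?_⟩
    by_cases hz : z = 0
    · simp [hz]
    · have hs : 0 < ∑ i, z i ^ 2 := by
        rcases Function.ne_iff.mp hz with ⟨i, hi⟩
        have : 0 < z i ^ 2 := by
          rcases (sq_nonneg (z i)).lt_or_eq with h | h
          · exact h
          · exact absurd (pow_eq_zero_iff (by norm_num) |>.mp h.symm) hi
        exact lt_of_lt_of_le this (Finset.single_le_sum (f := fun j => z j ^ 2)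
          (fun j _ => sq_nonneg (z j)) (Finset.mem_univ i))
      set r := Real.sqrt (∑ i, z i ^ 2) with hr
      have hrpos : 0 < r := Real.sqrt_pos.mpr hs
      have hr2 : r ^ 2 = ∑ i, z i ^ 2 := Real.sq_sqrt hs.le
      set w : Fin n → ℝ := r⁻¹ • z with hw
      have hwK : w ∈ K := by
        simp only [hK, Set.mem_setOf_eq, hw, Pi.smul_apply, smul_eq_mul, mul_pow]
        rw [← Finset.mul_sum, ← hr2]
        field_simp
      have hzw : z = r • w := by
        rw [hw, smul_smul, mul_inv_cancel₀ hrpos.ne', one_smul]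
      have hquad : z ⬝ᵥ M *ᵥ z = r ^ 2 * (w ⬝ᵥ M *ᵥ w) := by
        rw [hzw, smul_dotProduct, mulVec_smul, dotProduct_smul, smul_eq_mul, smul_eq_mul]
        ring
      rw [hquad, ← hr2]
      have hmin : z₀ ⬝ᵥ M *ᵥ z₀ ≤ w ⬝ᵥ M *ᵥ w := hz₀min hwK
      nlinarith [mul_le_mul_of_nonneg_left hmin (sq_nonneg r)]

lemma integrable_exp_quad {n : ℕ} {M : Matrix (Fin n) (Fin n) ℝ} (hM : M.PosDef) :
    Integrable (fun z : Fin n → ℝ => Real.exp (-(1 / 2) * (z ⬝ᵥ M *ᵥ z))) := by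
  obtain ⟨c, hc, hcle⟩ := eigen_lb hM
  have hint : Integrable (fun z : Fin n → ℝ => ∏ i, Real.exp (-(c / 2) * z i ^ 2)) := by
    apply Integrable.fintype_prod (f := fun _ t => Real.exp (-(c / 2) * t ^ 2))
    intro i
    simpa [neg_mul] using integrable_exp_neg_mul_sq (by linarith : 0 < c / 2)
  refine hint.mono ?_ ?_
  · exact ((continuous_const.mul (quad_cont M)).rexp).aestronglyMeasurable
  · refine Filter.Eventually.of_forall fun z => ?_
    rw [Real.norm_eq_abs, Real.norm_eq_abs, abs_of_nonneg (Real.exp_pos _).le,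
      abs_of_nonneg (Finset.prod_nonneg fun i _ => (Real.exp_pos _).le),
      ← Real.exp_sum]
    apply Real.exp_le_exp.mpr
    have h := hcle z
    have : ∑ i, -(c / 2) * z i ^ 2 = -(c / 2) * ∑ i, z i ^ 2 := by
      rw [Finset.mul_sum]
    rw [this]
    nlinarith

lemma gaussD_nonneg {n : ℕ} (M : Matrix (Fin n) (Fin n) ℝ) (m x : Fin n → ℝ) :
    0 ≤ gaussD M m x := by
  unfold gaussD
  positivity

lemma gaussD_le {n : ℕ} {M : Matrix (Fin n) (Fin n) ℝ} (hM : M.PosDef) (m x : Fin n → ℝ) :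
    gaussD M m x ≤ (Real.sqrt ((2 * Real.pi) ^ (Fintype.card (Fin n)) * M.det))⁻¹ := by
  unfold gaussD
  have hq : 0 ≤ (x - m) ⬝ᵥ (M⁻¹ *ᵥ (x - m)) := by
    have := hM.inv.posSemidef.dotProduct_mulVec_nonneg (x - m)
    simpa using this
  have : Real.exp (-(1 / 2) * ((x - m) ⬝ᵥ (M⁻¹ *ᵥ (x - m)))) ≤ 1 := by
    rw [Real.exp_le_one_iff]
    nlinarith
  nlinarith [inv_nonneg.mpr (Real.sqrt_nonneg ((2 * Real.pi) ^ (Fintype.card (Fin n)) * M.det)),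
    Real.exp_pos (-(1 / 2) * ((x - m) ⬝ᵥ (M⁻¹ *ᵥ (x - m))))]

lemma cont_gauss_affine (A : Matrix (Fin D) (Fin S) ℝ) (b : Fin D → ℝ)
    (Sx : Matrix (Fin D) (Fin D) ℝ) (Sz : Matrix (Fin S) (Fin S) ℝ) (x : Fin D → ℝ) :
    Continuous fun z : Fin S → ℝ => gaussD Sx (A *ᵥ z + b) x * gaussD Sz 0 z := by
  unfold gaussD
  have h1 : Continuous fun z : Fin S → ℝ => x - (A *ᵥ z + b) :=
    continuous_const.sub ((continuous_const.matrix_mulVec continuous_id).add continuous_const)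
  have h2 : Continuous fun z : Fin S → ℝ => z - 0 := continuous_id.sub continuous_const
  exact (continuous_const.mul ((continuous_const.mul
      (h1.dotProduct (continuous_const.matrix_mulVec h1))).rexp)).mul
    (continuous_const.mul ((continuous_const.mul
      (h2.dotProduct (continuous_const.matrix_mulVec h2))).rexp))

lemma integrable_gauss_affine (A : Matrix (Fin D) (Fin S) ℝ) (b : Fin D → ℝ)
    {Sx : Matrix (Fin D) (Fin D) ℝ} (hSx : Sx.PosDef)
    {Sz : Matrix (Fin S) (Fin S) ℝ} (hSz : Sz.PosDef) (x : Fin D → ℝ) :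
    Integrable (fun z : Fin S → ℝ => gaussD Sx (A *ᵥ z + b) x * gaussD Sz 0 z) := by
  set kx := (Real.sqrt ((2 * Real.pi) ^ (Fintype.card (Fin D)) * Sx.det))⁻¹ with hkx
  set kz := (Real.sqrt ((2 * Real.pi) ^ (Fintype.card (Fin S)) * Sz.det))⁻¹ with hkz
  have hint := (integrable_exp_quad hSz.inv).const_mul (kx * kz)
  refine hint.mono (cont_gauss_affine A b Sx Sz x).aestronglyMeasurable ?_
  refine Filter.Eventually.of_forall fun z => ?_
  have h1 : gaussD Sx (A *ᵥ z + b) x ≤ kx := gaussD_le hSx _ x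
  have h2 : gaussD Sz 0 z = kz * Real.exp (-(1 / 2) * (z ⬝ᵥ Sz⁻¹ *ᵥ z)) := by
    unfold gaussD
    rw [sub_zero]
  have hg1 := gaussD_nonneg Sx (A *ᵥ z + b) x
  have hg2 := gaussD_nonneg Sz 0 z
  have hkxnn : 0 ≤ kx := by rw [hkx]; positivity
  have hkznn : 0 ≤ kz := by rw [hkz]; positivity
  rw [Real.norm_eq_abs, Real.norm_eq_abs, abs_of_nonneg (mul_nonneg hg1 hg2),
    abs_of_nonneg (by positivity)]
  calc gaussD Sx (A *ᵥ z + b) x * gaussD Sz 0 z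
      ≤ kx * gaussD Sz 0 z := mul_le_mul_of_nonneg_right h1 hg2
    _ = kx * kz * Real.exp (-(1 / 2) * (z ⬝ᵥ Sz⁻¹ *ᵥ z)) := by rw [h2]; ring

end Aux

/-- The marginal density of a piecewise affine Gaussian generative model is a sum over the
regions of Gaussian densities times truncated Gaussian masses. -/
theorem marginal_density_piecewise_affine {S D : ℕ} {ι : Type} [Fintype ι]
    (region : ι → Set (Fin S → ℝ))
    (hdisj : Pairwise (Function.onFun Disjoint region))
    (hcover : (⋃ ω, region ω) = Set.univ)
    (hmeas : ∀ ω, MeasurableSet (region ω))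
    (A : ι → Matrix (Fin D) (Fin S) ℝ) (b : ι → Fin D → ℝ)
    (Sx : Matrix (Fin D) (Fin D) ℝ) (hSx : Sx.PosDef)
    (Sz : Matrix (Fin S) (Fin S) ℝ) (hSz : Sz.PosDef)
    (g : (Fin S → ℝ) → Fin D → ℝ)
    (hg : ∀ ω z, z ∈ region ω → g z = A ω *ᵥ z + b ω)
    (x : Fin D → ℝ) :
    (∫ z, gaussD Sx (g z) x * gaussD Sz 0 z) =
      ∑ ω, gaussD (Sx + A ω * Sz * (A ω)ᵀ) (b ω) x *
        ∫ z in region ω,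
          gaussD ((Sz⁻¹ + (A ω)ᵀ * Sx⁻¹ * A ω)⁻¹)
            ((Sz⁻¹ + (A ω)ᵀ * Sx⁻¹ * A ω)⁻¹ *ᵥ ((A ω)ᵀ *ᵥ (Sx⁻¹ *ᵥ (x - b ω)))) z := by
  classical
  set F : ι → (Fin S → ℝ) → ℝ :=
    fun ω z => gaussD Sx (A ω *ᵥ z + b ω) x * gaussD Sz 0 z with hF
  have hrepr : ∀ z, gaussD Sx (g z) x * gaussD Sz 0 z
      = ∑ ω, Set.indicator (region ω) (F ω) z := by
    intro z
    have hzmem : z ∈ ⋃ ω, region ω := hcover ▸ Set.mem_univ z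
    obtain ⟨ω₀, hω₀⟩ := Set.mem_iUnion.mp hzmem
    rw [Finset.sum_eq_single ω₀]
    · rw [Set.indicator_of_mem hω₀, hF, hg ω₀ z hω₀]
    · intro ω _ hne
      refine Set.indicator_of_notMem ?_ _
      exact fun hmem => Set.disjoint_left.mp (hdisj hne) hmem hω₀
    · intro h
      exact absurd (Finset.mem_univ ω₀) h
  calc (∫ z, gaussD Sx (g z) x * gaussD Sz 0 z)
      = ∫ z, ∑ ω, Set.indicator (region ω) (F ω) z := by
        congr 1
        funext z
        exact hrepr z
    _ = ∑ ω, ∫ z, Set.indicator (region ω) (F ω) z := by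
        refine integral_finset_sum _ fun ω _ => ?_
        exact (integrable_gauss_affine (A ω) (b ω) hSx hSz x).indicator (hmeas ω)
    _ = ∑ ω, ∫ z in region ω, F ω z := by
        refine Finset.sum_congr rfl fun ω _ => ?_
        rw [integral_indicator (hmeas ω)]
    _ = ∑ ω, gaussD (Sx + A ω * Sz * (A ω)ᵀ) (b ω) x *
          ∫ z in region ω,
            gaussD ((Sz⁻¹ + (A ω)ᵀ * Sx⁻¹ * A ω)⁻¹)
              ((Sz⁻¹ + (A ω)ᵀ * Sx⁻¹ * A ω)⁻¹ *ᵥ ((A ω)ᵀ *ᵥ (Sx⁻¹ *ᵥ (x - b ω)))) z := by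
        refine Finset.sum_congr rfl fun ω _ => ?_
        rw [← integral_const_mul]
        refine setIntegral_congr_fun (hmeas ω) fun z _ => ?_
        exact gauss_prod (A ω) (b ω) hSx hSz x z
end

section
/- Under the same piecewise affine Gaussian model, the posterior density p(z|x) = p(x|z)p(z)/p(x) equals p(x)^{-1} Σ_{ω∈Ω} 1_{z∈ω} φ(x; b_ω, Σx + A_ω Σz A_ω^T) φ(z; μ_ω(x), Σ_ω), i.e., it is a mixture of Gaussians truncated to the regions ω ∈ Ω. -/
open Matrix MeasureTheory

namespace PosteriorAux

lemma dot_swap {m n : Type} [Fintype m] [Fintype n] (M : Matrix m n ℝ)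
    (a : m → ℝ) (b : n → ℝ) : a ⬝ᵥ (M *ᵥ b) = (Mᵀ *ᵥ a) ⬝ᵥ b := by
  rw [dotProduct_mulVec, mulVec_transpose]

lemma dot_swap' {m n : Type} [Fintype m] [Fintype n] (M : Matrix m n ℝ)
    (a : n → ℝ) (b : m → ℝ) : (M *ᵥ a) ⬝ᵥ b = a ⬝ᵥ (Mᵀ *ᵥ b) := by
  rw [dotProduct_comm, dot_swap]; exact dotProduct_comm _ _

lemma transpose_eq_of_herm {n : Type} [Fintype n] {M : Matrix n n ℝ}
    (h : M.IsHermitian) : Mᵀ = M := by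
  rw [← Matrix.conjTranspose_eq_transpose_of_trivial]; exact h

lemma exp_merge (n1 n2 q1 q2 : ℝ) :
    n1 * Real.exp (-(1 / 2) * q1) * (n2 * Real.exp (-(1 / 2) * q2)) =
      (n1 * n2) * Real.exp (-(1 / 2) * (q1 + q2)) := by
  rw [mul_mul_mul_comm, ← Real.exp_add]; ring_nf

/-- Abstract quadratic-form identity behind completing the square. -/
lemma quad_identity {S D : ℕ} (A : Matrix (Fin D) (Fin S) ℝ)
    (P : Matrix (Fin D) (Fin D) ℝ) (Q Si T : Matrix (Fin S) (Fin S) ℝ)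
    (hP : Pᵀ = P) (hSis : Siᵀ = Si)
    (hSi : Si = Q + Aᵀ * P * A) (hT : Si * T = 1)
    (u : Fin D → ℝ) (z : Fin S → ℝ) :
    (u - A *ᵥ z) ⬝ᵥ (P *ᵥ (u - A *ᵥ z)) + z ⬝ᵥ (Q *ᵥ z) =
      u ⬝ᵥ ((P - P * A * T * Aᵀ * P) *ᵥ u) +
        (z - T *ᵥ (Aᵀ *ᵥ (P *ᵥ u))) ⬝ᵥ (Si *ᵥ (z - T *ᵥ (Aᵀ *ᵥ (P *ᵥ u)))) := by
  have hSiμ : Si *ᵥ (T *ᵥ (Aᵀ *ᵥ (P *ᵥ u))) = Aᵀ *ᵥ (P *ᵥ u) := by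
    rw [Matrix.mulVec_mulVec, hT, Matrix.one_mulVec]
  have hcross : u ⬝ᵥ (P *ᵥ (A *ᵥ z)) = z ⬝ᵥ (Aᵀ *ᵥ (P *ᵥ u)) := by
    rw [dot_swap, hP, dot_swap]; exact dotProduct_comm _ _
  have hcross2 : (A *ᵥ z) ⬝ᵥ (P *ᵥ u) = z ⬝ᵥ (Aᵀ *ᵥ (P *ᵥ u)) := by
    rw [dot_swap']
  have hquad : (A *ᵥ z) ⬝ᵥ (P *ᵥ (A *ᵥ z)) = z ⬝ᵥ ((Aᵀ * P * A) *ᵥ z) := by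
    rw [dot_swap', Matrix.mulVec_mulVec, Matrix.mulVec_mulVec]
  have hs : u ⬝ᵥ ((P * A * T * Aᵀ * P) *ᵥ u) =
      (Aᵀ *ᵥ (P *ᵥ u)) ⬝ᵥ (T *ᵥ (Aᵀ *ᵥ (P *ᵥ u))) := by
    simp only [← Matrix.mulVec_mulVec]
    rw [dot_swap, hP, dot_swap]
  have hμz : (T *ᵥ (Aᵀ *ᵥ (P *ᵥ u))) ⬝ᵥ (Si *ᵥ z) = z ⬝ᵥ (Aᵀ *ᵥ (P *ᵥ u)) := by
    rw [dot_swap, hSis, hSiμ]; exact dotProduct_comm _ _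
  have hμμ : (T *ᵥ (Aᵀ *ᵥ (P *ᵥ u))) ⬝ᵥ (Si *ᵥ (T *ᵥ (Aᵀ *ᵥ (P *ᵥ u)))) =
      (Aᵀ *ᵥ (P *ᵥ u)) ⬝ᵥ (T *ᵥ (Aᵀ *ᵥ (P *ᵥ u))) := by
    rw [hSiμ]; exact dotProduct_comm _ _
  have hSiz : z ⬝ᵥ (Si *ᵥ z) = z ⬝ᵥ (Q *ᵥ z) + z ⬝ᵥ ((Aᵀ * P * A) *ᵥ z) := by
    rw [hSi, Matrix.add_mulVec, dotProduct_add]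
  simp only [Matrix.mulVec_sub, Matrix.sub_mulVec, dotProduct_sub, sub_dotProduct]
  rw [hcross, hcross2, hquad, hs, hμz, hμμ, hSiμ, hSiz]
  ring

/-- The product of the likelihood and the prior densities equals the product of the
marginal and the posterior densities. -/
lemma gauss_product {S D : ℕ} (A : Matrix (Fin D) (Fin S) ℝ) (b : Fin D → ℝ)
    (Sx : Matrix (Fin D) (Fin D) ℝ) (hSx : Sx.PosDef)
    (Sz : Matrix (Fin S) (Fin S) ℝ) (hSz : Sz.PosDef)
    (x : Fin D → ℝ) (z : Fin S → ℝ) :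
    gaussD Sx (A *ᵥ z + b) x * gaussD Sz 0 z =
      gaussD (Sx + A * Sz * Aᵀ) b x *
        gaussD ((Sz⁻¹ + Aᵀ * Sx⁻¹ * A)⁻¹)
          ((Sz⁻¹ + Aᵀ * Sx⁻¹ * A)⁻¹ *ᵥ (Aᵀ *ᵥ (Sx⁻¹ *ᵥ (x - b)))) z := by
  set Si : Matrix (Fin S) (Fin S) ℝ := Sz⁻¹ + Aᵀ * Sx⁻¹ * A with hSi_def
  have hSxi : (Sx⁻¹).PosDef := hSx.inv
  have hSzi : (Sz⁻¹).PosDef := hSz.inv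
  have hP : (Aᵀ * Sx⁻¹ * A).PosSemidef := by
    have := hSxi.posSemidef.conjTranspose_mul_mul_same A
    rwa [Matrix.conjTranspose_eq_transpose_of_trivial] at this
  have hSi : Si.PosDef := hSzi.add_posSemidef hP
  have hM : (Sx + A * Sz * Aᵀ).PosDef := by
    have := hSz.posSemidef.mul_mul_conjTranspose_same A
    rw [Matrix.conjTranspose_eq_transpose_of_trivial] at this
    exact hSx.add_posSemidef this
  have hdSx := hSx.det_pos
  have hdSz := hSz.det_pos
  have hdSi := hSi.det_pos
  have hdM := hM.det_pos
  have hSiu : IsUnit Si.det := hdSi.ne'.isUnit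
  -- symmetry facts
  have hsymSx : (Sx⁻¹)ᵀ = Sx⁻¹ := transpose_eq_of_herm hSxi.isHermitian
  have hsymSi : Siᵀ = Si := transpose_eq_of_herm hSi.isHermitian
  -- inverse of inverse
  have hSiinv : Si⁻¹⁻¹ = Si := Matrix.nonsing_inv_nonsing_inv _ hSiu
  -- Woodbury
  have hWood : (Sx + A * Sz * Aᵀ)⁻¹ = Sx⁻¹ - Sx⁻¹ * A * Si⁻¹ * Aᵀ * Sx⁻¹ := by
    rw [hSi_def]
    exact Matrix.add_mul_mul_inv_eq_sub _ _ _ _ hSx.isUnit hSz.isUnit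
      (by rw [← hSi_def]; exact hSi.isUnit)
  -- determinant identity
  have hdet : (Sx + A * Sz * Aᵀ).det * (Si⁻¹).det = Sx.det * Sz.det := by
    have h1 : Sx + A * Sz * Aᵀ = Sx * (1 + (Sx⁻¹ * A) * (Sz * Aᵀ)) := by
      rw [Matrix.mul_add, Matrix.mul_one]
      congr 1
      calc A * Sz * Aᵀ = Sx * Sx⁻¹ * (A * (Sz * Aᵀ)) := by
            rw [Matrix.mul_nonsing_inv _ (Matrix.isUnit_iff_isUnit_det _ |>.mp hSx.isUnit),
              Matrix.one_mul, Matrix.mul_assoc]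
        _ = Sx * (Sx⁻¹ * A * (Sz * Aᵀ)) := by simp only [Matrix.mul_assoc]
    have h2 : (1 : Matrix (Fin S) (Fin S) ℝ) + (Sz * Aᵀ) * (Sx⁻¹ * A) = Sz * Si := by
      rw [hSi_def, Matrix.mul_add,
        Matrix.mul_nonsing_inv _ (Matrix.isUnit_iff_isUnit_det _ |>.mp hSz.isUnit)]
      congr 1
      simp only [Matrix.mul_assoc]
    rw [h1, Matrix.det_mul, Matrix.det_one_add_mul_comm, h2, Matrix.det_mul,
      Matrix.det_nonsing_inv]
    field_simp
    ring
    exact Ring.mul_inverse_cancel _ hSiu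
  -- the quadratic-form identity
  have hq : (x - (A *ᵥ z + b)) ⬝ᵥ (Sx⁻¹ *ᵥ (x - (A *ᵥ z + b))) +
      (z - 0) ⬝ᵥ (Sz⁻¹ *ᵥ (z - 0)) =
      (x - b) ⬝ᵥ ((Sx + A * Sz * Aᵀ)⁻¹ *ᵥ (x - b)) +
      (z - Si⁻¹ *ᵥ (Aᵀ *ᵥ (Sx⁻¹ *ᵥ (x - b)))) ⬝ᵥ
        (Si⁻¹⁻¹ *ᵥ (z - Si⁻¹ *ᵥ (Aᵀ *ᵥ (Sx⁻¹ *ᵥ (x - b))))) := by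
    have hx1 : x - (A *ᵥ z + b) = (x - b) - A *ᵥ z := by abel
    rw [hx1, hWood, hSiinv, sub_zero]
    exact quad_identity A Sx⁻¹ Sz⁻¹ Si Si⁻¹ hsymSx hsymSi hSi_def
      (Matrix.mul_nonsing_inv _ hSiu) (x - b) z
  -- the normalization identity
  have hn : (Real.sqrt ((2 * Real.pi) ^ D * Sx.det))⁻¹ *
      (Real.sqrt ((2 * Real.pi) ^ S * Sz.det))⁻¹ =
      (Real.sqrt ((2 * Real.pi) ^ D * (Sx + A * Sz * Aᵀ).det))⁻¹ *
      (Real.sqrt ((2 * Real.pi) ^ S * (Si⁻¹).det))⁻¹ := by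
    have h2π : (0 : ℝ) < 2 * Real.pi := by positivity
    have hdTi : (0:ℝ) < (Si⁻¹).det := by
      rw [Matrix.det_nonsing_inv, Ring.inverse_eq_inv]; exact inv_pos.mpr hdSi
    rw [← mul_inv, ← mul_inv, ← Real.sqrt_mul (mul_nonneg (by positivity) hdSx.le),
      ← Real.sqrt_mul (mul_nonneg (by positivity) hdM.le)]
    congr 2
    linear_combination (-((2 * Real.pi) ^ D * (2 * Real.pi) ^ S)) * hdet
  -- put everything together
  simp only [gaussD, Fintype.card_fin]
  rw [exp_merge, exp_merge, hq, hn]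

end PosteriorAux

/-- The posterior density of a piecewise affine Gaussian generative model is a mixture of
Gaussians truncated to the regions `ω ∈ Ω`. -/
theorem posterior_density_piecewise_affine {S D : ℕ} {ι : Type} [Fintype ι]
    (region : ι → Set (Fin S → ℝ))
    (hdisj : Pairwise (Function.onFun Disjoint region))
    (hcover : (⋃ ω, region ω) = Set.univ)
    (hmeas : ∀ ω, MeasurableSet (region ω))
    (A : ι → Matrix (Fin D) (Fin S) ℝ) (b : ι → Fin D → ℝ)
    (Sx : Matrix (Fin D) (Fin D) ℝ) (hSx : Sx.PosDef)
    (Sz : Matrix (Fin S) (Fin S) ℝ) (hSz : Sz.PosDef)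
    (g : (Fin S → ℝ) → Fin D → ℝ)
    (hg : ∀ ω z, z ∈ region ω → g z = A ω *ᵥ z + b ω)
    (x : Fin D → ℝ) (px : ℝ)
    (hpx : px = ∫ z, gaussD Sx (g z) x * gaussD Sz 0 z)
    (hpx_pos : 0 < px) :
    ∀ z, gaussD Sx (g z) x * gaussD Sz 0 z / px =
      px⁻¹ * ∑ ω, Set.indicator (region ω)
        (fun z' => gaussD (Sx + A ω * Sz * (A ω)ᵀ) (b ω) x *
          gaussD ((Sz⁻¹ + (A ω)ᵀ * Sx⁻¹ * A ω)⁻¹)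
            ((Sz⁻¹ + (A ω)ᵀ * Sx⁻¹ * A ω)⁻¹ *ᵥ ((A ω)ᵀ *ᵥ (Sx⁻¹ *ᵥ (x - b ω)))) z') z := by
  intro z
  have hz : z ∈ ⋃ ω, region ω := by rw [hcover]; trivial
  obtain ⟨ω, hzω⟩ := Set.mem_iUnion.mp hz
  have hsum : ∑ ω', Set.indicator (region ω')
      (fun z' => gaussD (Sx + A ω' * Sz * (A ω')ᵀ) (b ω') x *
        gaussD ((Sz⁻¹ + (A ω')ᵀ * Sx⁻¹ * A ω')⁻¹)
          ((Sz⁻¹ + (A ω')ᵀ * Sx⁻¹ * A ω')⁻¹ *ᵥ ((A ω')ᵀ *ᵥ (Sx⁻¹ *ᵥ (x - b ω')))) z') z =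
      gaussD (Sx + A ω * Sz * (A ω)ᵀ) (b ω) x *
        gaussD ((Sz⁻¹ + (A ω)ᵀ * Sx⁻¹ * A ω)⁻¹)
          ((Sz⁻¹ + (A ω)ᵀ * Sx⁻¹ * A ω)⁻¹ *ᵥ ((A ω)ᵀ *ᵥ (Sx⁻¹ *ᵥ (x - b ω)))) z := by
    rw [Finset.sum_eq_single ω]
    · exact Set.indicator_of_mem hzω _
    · intro ω' _ hne
      have hdz : z ∉ region ω' := fun hz' =>
        (hdisj hne).le_bot ⟨hz', hzω⟩
      exact Set.indicator_of_notMem hdz _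
    · intro h; exact absurd (Finset.mem_univ ω) h
  rw [hsum, hg ω z hzω, PosteriorAux.gauss_product (A ω) (b ω) Sx hSx Sz hSz x z,
    div_eq_inv_mul]
end
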